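/- Let T be a phylogenetic tree with labeled vertex set L, let G be its distance graph, and let R : L → ℕ be an injective ranking. Let {i,j} ∈ E_T with Sg_R(i) ≠ Sg_R(j), and let V_i and V_j be the two vertex sets of the components of T obtained by deleting the edge {i,j}, with i ∈ V_i and j ∈ V_j; set L_i = L ∩ V_i and L_j = L ∩ V_j. Then Sg_R(i) ∈ L_i, Sg_R(j) ∈ L_j, and for every k ∈ L_i and l ∈ L_j with {k,l} ≠ {Sg_R(i), Sg_R(j)}, the edge {Sg_R(i), Sg_R(j)} precedes {k,l} in the order <_R; that is, {Sg_R(i), Sg_R(j)} is the <_R-minimum edge of G with one endpoint in L_i and the other in L_j. -/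

import Mathlib

open SimpleGraph

/-- The threshold subgraph `G_{≤ t}`: same vertices, only edges of weight `≤ t`. -/
def thresholdGraph {V : Type*} (G : SimpleGraph V) (w : Sym2 V → ℝ) (t : ℝ) :
    SimpleGraph V where
  Adj u v := G.Adj u v ∧ w s(u, v) ≤ t
  symm := by
    refine ⟨fun u v hv => ?_⟩
    exact ⟨hv.1.symm, by rw [Sym2.eq_swap]; exact hv.2⟩
  loopless := ⟨fun v hv => G.loopless.irrefl v hv.1⟩

/-- The strict threshold subgraph `G_{< t}`. -/
def strictThresholdGraph {V : Type*} (G : SimpleGraph V) (w : Sym2 V → ℝ) (t : ℝ) :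
    SimpleGraph V where
  Adj u v := G.Adj u v ∧ w s(u, v) < t
  symm := by
    refine ⟨fun u v hv => ?_⟩
    exact ⟨hv.1.symm, by rw [Sym2.eq_swap]; exact hv.2⟩
  loopless := ⟨fun v hv => G.loopless.irrefl v hv.1⟩

/-- The laminar family of an edge-weighted graph: the whole vertex set together with the
vertex sets of the connected components of every threshold subgraph. -/
def laminarFamily {V : Type*} (G : SimpleGraph V) (w : Sym2 V → ℝ) : Set (Set V) :=
  insert Set.univ
    {S | ∃ (t : ℝ) (C : (thresholdGraph G w t).ConnectedComponent), S = C.supp}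

/-- `M` is a spanning tree of `G`. -/
def IsSpanningTree {V : Type*} (G M : SimpleGraph V) : Prop :=
  M ≤ G ∧ M.IsTree

/-- Total weight of (the edges of) a graph. -/
noncomputable def totalWeight {V : Type*} [Finite V] (M : SimpleGraph V)
    (w : Sym2 V → ℝ) : ℝ :=
  ∑ e ∈ M.edgeSet.toFinite.toFinset, w e

/-- `M` is a minimum spanning tree of `G` with respect to the weights `w`. -/
def IsMST {V : Type*} [Finite V] (G : SimpleGraph V) (w : Sym2 V → ℝ)
    (M : SimpleGraph V) : Prop :=
  IsSpanningTree G M ∧ ∀ M' : SimpleGraph V, IsSpanningTree G M' →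
    totalWeight M w ≤ totalWeight M' w

/-- A phylogenetic tree: a finite tree with strictly positive edge lengths and a nonempty
set `L` of labeled vertices, each hidden vertex having degree at least 3. -/
structure PhyloTree (V : Type*) where
  finV : Finite V
  T : SimpleGraph V
  isTree : T.IsTree
  len : Sym2 V → ℝ
  len_pos : ∀ e ∈ T.edgeSet, 0 < len e
  L : Set V
  L_nonempty : L.Nonempty
  hidden_deg : ∀ v, v ∉ L → 3 ≤ (T.neighborSet v).ncard

namespace PhyloTree

variable {V : Type*}

/-- The unique path between two vertices of the tree. -/
noncomputable def path (P : PhyloTree V) (u v : V) : P.T.Walk u v :=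
  (P.isTree.existsUnique_path u v).exists.choose

lemma path_isPath (P : PhyloTree V) (u v : V) : (P.path u v).IsPath :=
  (P.isTree.existsUnique_path u v).exists.choose_spec

/-- The tree distance: the sum of the edge lengths along the unique path. -/
noncomputable def dist (P : PhyloTree V) (u v : V) : ℝ :=
  ((P.path u v).edges.map P.len).sum

lemma dist_comm (P : PhyloTree V) (u v : V) : P.dist u v = P.dist v u := by
  have h : (P.path u v).reverse = P.path v u :=
    (P.isTree.existsUnique_path v u).unique ((P.path_isPath u v).reverse)
      (P.path_isPath v u)
  unfold dist
  rw [← h, SimpleGraph.Walk.edges_reverse, List.map_reverse, List.sum_reverse]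

/-- The tree distance as a symmetric function on unordered pairs. -/
noncomputable def wdist (P : PhyloTree V) : Sym2 V → ℝ :=
  Sym2.lift ⟨fun u v => P.dist u v, fun u v => P.dist_comm u v⟩

/-- The surrogate set of a vertex: the labeled vertices closest to it. -/
def Sg (P : PhyloTree V) (h : V) : Set V :=
  {l | l ∈ P.L ∧ ∀ l' ∈ P.L, P.dist l h ≤ P.dist l' h}

/-- `s` is the surrogate vertex `Sg_R(h)` of `h` w.r.t. the ranking `R`:
the element of the surrogate set of `h` of smallest `R`-value. -/
def IsSgR (P : PhyloTree V) (R : V → ℕ) (h : V) (s : V) : Prop :=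
  s ∈ P.Sg h ∧ ∀ l ∈ P.Sg h, R s ≤ R l

/-- The edge weights of the distance graph of `P` (the complete graph on `↥P.L`). -/
noncomputable def wG (P : PhyloTree V) : Sym2 ↥P.L → ℝ :=
  fun e => P.wdist (e.map Subtype.val)

/-- An edge `e` of the distance graph lying in at least one MST (i.e. an edge of `g`). -/
def mstEdge (P : PhyloTree V) (e : Sym2 ↥P.L) : Prop :=
  haveI := P.finV
  ∃ M : SimpleGraph ↥P.L, IsMST (⊤ : SimpleGraph ↥P.L) P.wG M ∧ e ∈ M.edgeSet

/-- `δ_max(v)`: the maximum degree of `v` over all MSTs of the distance graph. -/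
noncomputable def deltaMax (P : PhyloTree V) (v : ↥P.L) : ℕ :=
  haveI := P.finV
  sSup {d : ℕ | ∃ M : SimpleGraph ↥P.L,
    IsMST (⊤ : SimpleGraph ↥P.L) P.wG M ∧ d = (M.neighborSet v).ncard}

end PhyloTree

/-- The smaller of the two ranks of the endpoints of an edge. -/
def sym2MinR {α : Type*} (R : α → ℕ) : Sym2 α → ℕ :=
  Sym2.lift ⟨fun a b => min (R a) (R b), fun a b => min_comm _ _⟩

/-- The larger of the two ranks of the endpoints of an edge. -/
def sym2MaxR {α : Type*} (R : α → ℕ) : Sym2 α → ℕ :=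
  Sym2.lift ⟨fun a b => max (R a) (R b), fun a b => max_comm _ _⟩

/-- The strict total order `<_R` on edges: first by weight, then by the smaller rank of
the endpoints, then by the larger rank of the endpoints. -/
def edgeLT {α : Type*} (w : Sym2 α → ℝ) (R : α → ℕ) (e f : Sym2 α) : Prop :=
  w e < w f ∨ (w e = w f ∧ (sym2MinR R e < sym2MinR R f ∨
    (sym2MinR R e = sym2MinR R f ∧ sym2MaxR R e < sym2MaxR R f)))

/-- `M` is the vertex-ranked MST of `G` w.r.t. the ranking `R`: a spanning tree such that
every non-tree edge `{u,v}` of `G` is the `<_R`-greatest edge of the cycle it closes,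
i.e. every edge of the `M`-path from `u` to `v` is `<_R`-smaller than `{u,v}`. -/
def IsVRMST {α : Type*} (G : SimpleGraph α) (w : Sym2 α → ℝ) (R : α → ℕ)
    (M : SimpleGraph α) : Prop :=
  IsSpanningTree G M ∧ ∀ u v : α, G.Adj u v → ¬M.Adj u v →
    ∀ p : M.Walk u v, p.IsPath → ∀ f ∈ p.edges, edgeLT w R f s(u, v)



namespace PhyloHelp

variable {V : Type*}

lemma mapLe_edges {G G' : SimpleGraph V} (h : G ≤ G') {u v : V} (p : G.Walk u v) :
    (p.mapLe h).edges = p.edges := by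
  rw [Walk.mapLe, Walk.edges_map]
  have : Sym2.map ⇑(Hom.ofLE h) = id := by
    funext e; induction e with | _ a b => rfl
  rw [this, List.map_id]

lemma mapLe_support {G G' : SimpleGraph V} (h : G ≤ G') {u v : V} (p : G.Walk u v) :
    (p.mapLe h).support = p.support := by
  rw [Walk.mapLe, Walk.support_map]
  have : ⇑(Hom.ofLE h) = id := rfl
  rw [this, List.map_id]

end PhyloHelp

namespace PhyloTree

variable {V : Type*} (P : PhyloTree V)

lemma path_unique {u v : V} (p : P.T.Walk u v) (hp : p.IsPath) : P.path u v = p :=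
  (P.isTree.existsUnique_path u v).unique (P.path_isPath u v) hp

lemma dist_eq {u v : V} (p : P.T.Walk u v) (hp : p.IsPath) :
    P.dist u v = (p.edges.map P.len).sum := by
  rw [dist, P.path_unique p hp]

lemma dist_self (u : V) : P.dist u u = 0 := by
  rw [P.dist_eq Walk.nil Walk.IsPath.nil]; simp

lemma wdist_mk (u v : V) : P.wdist s(u, v) = P.dist u v := rfl

lemma not_reachable_delete {i j : V} (hij : P.T.Adj i j) :
    ¬ (P.T.deleteEdges {s(i, j)}).Reachable i j := by
  have hb : P.T.IsBridge s(i, j) :=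
    (isAcyclic_iff_forall_adj_isBridge.mp P.isTree.IsAcyclic) hij
  exact isBridge_iff.mp hb

/-- Cross additivity. -/
lemma dist_cross {i j u v : V} (hij : P.T.Adj i j)
    (hu : (P.T.deleteEdges {s(i, j)}).Reachable u i)
    (hv : (P.T.deleteEdges {s(i, j)}).Reachable j v) :
    P.dist u v = P.dist u i + P.len s(i, j) + P.dist j v := by
  classical
  set D := P.T.deleteEdges {s(i, j)} with hD
  have hle : D ≤ P.T := SimpleGraph.deleteEdges_le _
  have hbr : ¬ D.Reachable i j := P.not_reachable_delete hij
  obtain ⟨p0⟩ := hu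
  obtain ⟨q0⟩ := hv
  set p := p0.bypass with hp'
  set q := q0.bypass with hq'
  have hp : p.IsPath := p0.bypass_isPath
  have hq : q.IsPath := q0.bypass_isPath
  -- any vertex on p is D-reachable to i; any vertex on q is D-reachable from j
  have hpReach : ∀ x ∈ p.support, D.Reachable x i := fun x hx => ⟨p.dropUntil x hx⟩
  have hqReach : ∀ x ∈ q.support, D.Reachable j x := fun x hx => ⟨q.takeUntil x hx⟩
  have hdisj : p.support.Disjoint q.support := by
    intro x hxp hxq
    exact hbr ((hqReach x hxq).trans (hpReach x hxp)).symm
  set w : P.T.Walk u v := (p.mapLe hle).append (Walk.cons hij (q.mapLe hle)) with hw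
  have hwpath : w.IsPath := by
    rw [Walk.isPath_def, hw, Walk.support_append, Walk.support_cons, List.tail_cons,
      PhyloHelp.mapLe_support, PhyloHelp.mapLe_support]
    exact List.Nodup.append hp.support_nodup hq.support_nodup hdisj
  have hwe : w.edges = p.edges ++ (s(i, j) :: q.edges) := by
    rw [hw, Walk.edges_append, Walk.edges_cons, PhyloHelp.mapLe_edges, PhyloHelp.mapLe_edges]
  rw [P.dist_eq w hwpath, hwe,
    P.dist_eq (p.mapLe hle) (hp.mapLe hle), P.dist_eq (q.mapLe hle) (hq.mapLe hle),
    PhyloHelp.mapLe_edges, PhyloHelp.mapLe_edges]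
  simp [List.map_append]
  ring

/-- Dichotomy: every vertex lies on one side of the deleted edge. -/
lemma side_dichotomy {i j : V} (hij : P.T.Adj i j) (u : V) :
    (P.T.deleteEdges {s(i, j)}).Reachable u i ∨ (P.T.deleteEdges {s(i, j)}).Reachable u j := by
  classical
  set D := P.T.deleteEdges {s(i, j)} with hD
  set r := P.path u i with hr
  have hrp : r.IsPath := P.path_isPath u i
  by_cases he : s(i, j) ∈ r.edges
  · right
    have hj : j ∈ r.support := r.snd_mem_support_of_mem_edges he
    set q := r.takeUntil j hj with hq
    have hqp : q.IsPath := hrp.takeUntil hj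
    have hqe : s(i, j) ∉ q.edges := by
      intro hin
      have hiq : i ∈ q.support := q.fst_mem_support_of_mem_edges hin
      have hspec := r.take_spec hj
      have hnodup : r.support.Nodup := hrp.support_nodup
      rw [← hspec, Walk.support_append] at hnodup
      have hdisj := List.disjoint_of_nodup_append hnodup
      have hid : i ∈ (r.dropUntil j hj).support := Walk.end_mem_support _
      have : i ∈ (r.dropUntil j hj).support.tail := by
        have hcons := Walk.support_eq_cons (r.dropUntil j hj)
        rw [hcons] at hid
        rcases List.mem_cons.mp hid with h1 | h1
        · exact absurd h1 hij.ne
        · exact h1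
      exact hdisj hiq this
    refine ⟨q.toDeleteEdges {s(i, j)} ?_⟩
    intro e hei he
    rw [Set.mem_singleton_iff] at he
    subst he
    exact hqe hei
  · left
    refine ⟨r.toDeleteEdges {s(i, j)} ?_⟩
    intro e hei hmem
    rw [Set.mem_singleton_iff] at hmem
    subst hmem
    exact he hei


lemma dist_left {i j u : V} (hij : P.T.Adj i j)
    (hu : (P.T.deleteEdges {s(i, j)}).Reachable u i) :
    P.dist u j = P.dist u i + P.len s(i, j) := by
  have := P.dist_cross hij hu (Reachable.refl j)
  rw [P.dist_self] at this
  linarith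

lemma dist_right {i j u : V} (hij : P.T.Adj i j)
    (hu : (P.T.deleteEdges {s(i, j)}).Reachable u j) :
    P.dist u i = P.dist u j + P.len s(i, j) := by
  have hs : s(j, i) = s(i, j) := Sym2.eq_swap
  have h2 : (P.T.deleteEdges {s(j, i)}).Reachable u j := by rwa [hs]
  have := P.dist_left hij.symm h2
  rwa [hs] at this

lemma sg_side {i j si sj : V} (R : V → ℕ) (hR : Set.InjOn R P.L) (hij : P.T.Adj i j)
    (hsi : P.IsSgR R i si) (hsj : P.IsSgR R j sj) (hne : si ≠ sj) :
    (P.T.deleteEdges {s(i, j)}).Reachable si i := by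
  have hpos : 0 < P.len s(i, j) := P.len_pos _ (P.T.mem_edgeSet.mpr hij)
  rcases P.side_dichotomy hij si with h | hsiJ
  · exact h
  exfalso
  have e1 : P.dist si i = P.dist si j + P.len s(i, j) := P.dist_right hij hsiJ
  have h1 : P.dist si i ≤ P.dist sj i := hsi.1.2 sj hsj.1.1
  have h2 : P.dist sj j ≤ P.dist si j := hsj.1.2 si hsi.1.1
  rcases P.side_dichotomy hij sj with hsjI | hsjJ
  · have e2 : P.dist sj j = P.dist sj i + P.len s(i, j) := P.dist_left hij hsjI
    linarith
  · have e2 : P.dist sj i = P.dist sj j + P.len s(i, j) := P.dist_right hij hsjJ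
    have q1 : P.dist sj i = P.dist si i := by linarith
    have q2 : P.dist si j = P.dist sj j := by linarith
    have hsjSgi : sj ∈ P.Sg i := ⟨hsj.1.1, fun l' hl' => by
      rw [q1]; exact hsi.1.2 l' hl'⟩
    have hsiSgj : si ∈ P.Sg j := ⟨hsi.1.1, fun l' hl' => by
      rw [q2]; exact hsj.1.2 l' hl'⟩
    have hRR : R si = R sj := le_antisymm (hsi.2 sj hsjSgi) (hsj.2 si hsiSgj)
    exact hne (hR hsi.1.1 hsj.1.1 hRR)

end PhyloTree

/-- the edge between the surrogates of the endpoints of a tree edge is the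
`<_R`-minimum edge of the distance graph crossing the split induced by that edge. -/
theorem surrogate_edge_is_min_crossing {V : Type*} (P : PhyloTree V) (R : V → ℕ)
    (hR : Set.InjOn R P.L) (i j si sj : V) (hij : P.T.Adj i j)
    (hsi : P.IsSgR R i si) (hsj : P.IsSgR R j sj) (hne : si ≠ sj) :
    si ∈ P.L ∩ {u | (P.T.deleteEdges {s(i, j)}).Reachable u i} ∧
    sj ∈ P.L ∩ {u | (P.T.deleteEdges {s(i, j)}).Reachable u j} ∧
    ∀ k ∈ P.L ∩ {u | (P.T.deleteEdges {s(i, j)}).Reachable u i},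
      ∀ l ∈ P.L ∩ {u | (P.T.deleteEdges {s(i, j)}).Reachable u j},
        s(k, l) ≠ s(si, sj) → edgeLT P.wdist R s(si, sj) s(k, l) := by
  have hsiI : (P.T.deleteEdges {s(i, j)}).Reachable si i := P.sg_side R hR hij hsi hsj hne
  have hsjJ : (P.T.deleteEdges {s(i, j)}).Reachable sj j := by
    have := P.sg_side R hR hij.symm hsj hsi hne.symm
    rwa [Sym2.eq_swap] at this
  have hdisjSide : ∀ x, (P.T.deleteEdges {s(i, j)}).Reachable x i →
      (P.T.deleteEdges {s(i, j)}).Reachable x j → False := fun x h1 h2 =>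
    P.not_reachable_delete hij (h1.symm.trans h2)
  refine ⟨⟨hsi.1.1, hsiI⟩, ⟨hsj.1.1, hsjJ⟩, ?_⟩
  intro k hk l hl hkl
  obtain ⟨hkL, hkI⟩ := hk
  obtain ⟨hlL, hlJ⟩ := hl
  have esisj : P.dist si sj = P.dist si i + P.len s(i, j) + P.dist sj j := by
    rw [P.dist_cross hij hsiI hsjJ.symm, P.dist_comm j sj]
  have ekl : P.dist k l = P.dist k i + P.len s(i, j) + P.dist l j := by
    rw [P.dist_cross hij hkI hlJ.symm, P.dist_comm j l]
  have hk1 : P.dist si i ≤ P.dist k i := hsi.1.2 k hkL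
  have hl1 : P.dist sj j ≤ P.dist l j := hsj.1.2 l hlL
  rcases lt_or_ge (P.dist si sj) (P.dist k l) with hlt | hge
  · exact Or.inl hlt
  · have heq : P.dist si sj = P.dist k l := le_antisymm (by linarith) hge
    have hki : P.dist k i = P.dist si i := by linarith
    have hlj : P.dist l j = P.dist sj j := by linarith
    have hkSg : k ∈ P.Sg i := ⟨hkL, fun l' hl' => by rw [hki]; exact hsi.1.2 l' hl'⟩
    have hlSg : l ∈ P.Sg j := ⟨hlL, fun l' hl' => by rw [hlj]; exact hsj.1.2 l' hl'⟩
    have hRk : R si ≤ R k := hsi.2 k hkSg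
    have hRl : R sj ≤ R l := hsj.2 l hlSg
    have hstrong : R si < R k ∨ R sj < R l := by
      by_contra hcon
      push_neg at hcon
      have hk' : k = si := hR hkL hsi.1.1 (le_antisymm hcon.1 hRk)
      have hl' : l = sj := hR hlL hsj.1.1 (le_antisymm hcon.2 hRl)
      exact hkl (by rw [hk', hl'])
    have hRsisj : R si ≠ R sj := fun h => hne (hR hsi.1.1 hsj.1.1 h)
    refine Or.inr ⟨heq, ?_⟩
    show min (R si) (R sj) < min (R k) (R l) ∨
      (min (R si) (R sj) = min (R k) (R l) ∧ max (R si) (R sj) < max (R k) (R l))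
    omega
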